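/- The number of (m,n)-Dyck paths, for coprime positive integers m and n, is (1/(m+n)) * binomial(m+n, n). -/

import Mathlib

namespace Sweep18

/-- count of `c` in the first `i` entries of the doubled list. -/
def cnt (l : List Bool) (c : Bool) (i : ℕ) : ℕ := ((l ++ l).take i).count c

/-- weighted partial sum. -/
def G (m n : ℕ) (l : List Bool) (i : ℕ) : ℤ :=
  (m : ℤ) * cnt l true i - (n : ℤ) * cnt l false i

/-- The Dyck property from the theorem statement. -/
def DyckP (m n : ℕ) (p : List Bool) : Prop :=
  ∀ k, n * ((p.take k).count false) ≤ m * ((p.take k).count true)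

lemma drop_double {l : List Bool} {k : ℕ} (hk : k ≤ l.length) :
    (l ++ l).drop k = l.rotate k ++ l.drop k := by
  rw [List.rotate_eq_drop_append_take hk, List.drop_append_of_le_length hk,
    List.append_assoc, List.take_append_drop]

lemma take_rotate {l : List Bool} {k j : ℕ} (hk : k ≤ l.length) (hj : j ≤ l.length) :
    (l.rotate k).take j = ((l ++ l).drop k).take j := by
  rw [drop_double hk, List.take_append_of_le_length (by rw [List.length_rotate]; exact hj)]

lemma cnt_add_rotate {l : List Bool} {k j : ℕ} (hk : k ≤ l.length) (hj : j ≤ l.length)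
    (c : Bool) : cnt l c k + ((l.rotate k).take j).count c = cnt l c (k + j) := by
  rw [take_rotate hk hj, cnt, cnt, List.take_add, List.count_append]

lemma cnt_true_add_false {l : List Bool} {i : ℕ} (hi : i ≤ l.length + l.length) :
    cnt l true i + cnt l false i = i := by
  rw [cnt, cnt, List.count_true_add_count_false, List.length_take, List.length_append,
    min_eq_left hi]

lemma take_double_of_le {l : List Bool} {i : ℕ} (hi : i ≤ l.length) :
    (l ++ l).take i = l.take i :=
  List.take_append_of_le_length hi

lemma cnt_length {l : List Bool} (c : Bool) : cnt l c l.length = l.count c := by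
  rw [cnt, take_double_of_le le_rfl, List.take_of_length_le le_rfl]

lemma cnt_le {l : List Bool} {i : ℕ} (hi : i ≤ l.length) (c : Bool) :
    cnt l c i ≤ l.count c := by
  rw [cnt, take_double_of_le hi]
  exact (l.take_sublist i).count_le _

lemma cnt_mono {l : List Bool} {i j : ℕ} (hij : i ≤ j) (c : Bool) :
    cnt l c i ≤ cnt l c j := by
  rw [cnt, cnt]
  exact ((List.take_sublist_take_left hij).count_le _)

section MN

variable {m n : ℕ} {l : List Bool}
variable (hm : 0 < m) (hn : 0 < n) (hco : Nat.Coprime m n)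
variable (hlen : l.length = m + n) (hct : l.count true = n)

include hlen hct

lemma count_false : l.count false = m := by
  have := List.count_true_add_count_false l
  omega

lemma cnt_per {i : ℕ} (hi : i ≤ l.length) :
    cnt l true (l.length + i) = n + cnt l true i ∧
    cnt l false (l.length + i) = m + cnt l false i := by
  have h1 : (l ++ l).take (l.length + i) = l ++ l.take i := by
    rw [List.take_add, List.take_append_of_le_length le_rfl, List.take_length,
      List.drop_append_of_le_length le_rfl, List.drop_length, List.nil_append]
  constructor <;>
    · rw [cnt, h1, List.count_append, cnt, take_double_of_le hi]
      first
      | rw [hct]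
      | rw [count_false hlen hct]

lemma G_per {i : ℕ} (hi : i ≤ l.length) : G m n l (l.length + i) = G m n l i := by
  obtain ⟨h1, h2⟩ := cnt_per hlen hct hi
  rw [G, G, h1, h2]
  push_cast
  ring_nf

omit hlen hct in
lemma G_zero : G m n l 0 = 0 := by simp [G, cnt]

lemma G_length : G m n l l.length = 0 := by
  rw [G, cnt_length, cnt_length, hct, count_false hlen hct]
  push_cast
  ring

/-- Characterization: the rotation by `k` is Dyck iff `G k` is a minimum. -/
lemma dyck_rotate_iff {k : ℕ} (hk : k ≤ l.length) :
    DyckP m n (l.rotate k) ↔ ∀ i ≤ l.length, G m n l k ≤ G m n l i := by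
  have hGstep : ∀ j ≤ l.length, G m n l (k + j) - G m n l k =
      (m : ℤ) * (((l.rotate k).take j).count true) -
      (n : ℤ) * (((l.rotate k).take j).count false) := by
    intro j hj
    have h1 := cnt_add_rotate hk hj true
    have h2 := cnt_add_rotate hk hj false
    rw [G, G, ← h1, ← h2]
    push_cast
    ring
  constructor
  · intro hd i hi
    -- find j with k + j representing i modulo length
    rcases le_or_gt k i with hki | hik
    · have hj : i - k ≤ l.length := le_trans (Nat.sub_le _ _) hi
      have := hGstep (i - k) hj
      rw [Nat.add_sub_cancel' hki] at this
      have hd' := hd (i - k)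
      omega
    · -- use i + length
      have hj : l.length + i - k ≤ l.length := by omega
      have := hGstep (l.length + i - k) hj
      rw [Nat.add_sub_cancel' (by omega)] at this
      rw [G_per hlen hct hi] at this
      have hd' := hd (l.length + i - k)
      omega
  · intro hmin j
    rcases le_or_gt j l.length with hj | hj
    · have := hGstep j hj
      rcases le_or_gt (k + j) l.length with hkj | hkj
      · have := hmin (k + j) hkj
        omega
      · have he : k + j = l.length + (k + j - l.length) := by omega
        have hle : k + j - l.length ≤ l.length := by omega
        rw [he, G_per hlen hct hle] at this
        have := hmin (k + j - l.length) hle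
        omega
    · -- take j = whole list
      have hlenr : (l.rotate j).length = l.length := List.length_rotate l j
      have htk : (l.rotate k).take j = l.rotate k :=
        List.take_of_length_le (by rw [List.length_rotate]; omega)
      have hcr : ∀ c, (l.rotate k).count c = l.count c :=
        fun c => ((l.rotate_perm k).count_eq c)
      rw [htk, hcr, hcr, hct, count_false hlen hct, Nat.mul_comm]

/-- Distinctness of partial sums. -/
lemma G_inj (hn : 0 < n) (hco : Nat.Coprime m n) {i j : ℕ} (hij : i < j) (hj : j ≤ l.length)
    (hG : G m n l i = G m n l j) : i = 0 ∧ j = l.length := by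
  have hi2 : i ≤ l.length + l.length := by omega
  have hj2 : j ≤ l.length + l.length := by omega
  have hsum_i := cnt_true_add_false hi2
  have hsum_j := cnt_true_add_false hj2
  have hmt := cnt_mono (le_of_lt hij) (l := l) true
  have hmf := cnt_mono (le_of_lt hij) (l := l) false
  have hbt : cnt l true j ≤ n := by rw [← hct]; exact cnt_le hj true
  have hbf : cnt l false j ≤ m := by
    rw [← count_false hlen hct]; exact cnt_le hj false
  obtain ⟨a, ha⟩ : ∃ x, cnt l true j = cnt l true i + x :=
    ⟨_, (Nat.add_sub_cancel' hmt).symm⟩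
  obtain ⟨b, hb⟩ : ∃ x, cnt l false j = cnt l false i + x :=
    ⟨_, (Nat.add_sub_cancel' hmf).symm⟩
  have hab : a + b = j - i := by omega
  have hmnz : (m : ℤ) * a = (n : ℤ) * b := by
    have hG' := hG
    rw [G, G] at hG'
    push_cast [ha, hb] at hG'
    linarith
  have hmn : m * a = n * b := by exact_mod_cast hmnz
  have hdvd : n ∣ a := (Nat.Coprime.symm hco).dvd_of_dvd_mul_left ⟨b, hmn⟩
  have han : a ≤ n := by omega
  have hcase : a = 0 ∨ a = n := by
    rcases Nat.eq_zero_or_pos a with h0 | hpos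
    · exact Or.inl h0
    · exact Or.inr (le_antisymm han (Nat.le_of_dvd hpos hdvd))
  rcases hcase with h0 | hN
  · exfalso
    have hb0 : b = 0 := by
      have hnb : n * b = 0 := by rw [← hmn, h0, Nat.mul_zero]
      exact (Nat.mul_eq_zero.mp hnb).resolve_left (by omega)
    omega
  · have hbm : b = m := by
      have h2 : n * b = n * m := by rw [← hmn, hN]; ring
      exact Nat.eq_of_mul_eq_mul_left hn h2
    omega

include hm hn

/-- Exists a unique rotation index that is Dyck. -/
lemma exists_unique_dyck_rotate (hco : Nat.Coprime m n) :
    ∃! k, k < l.length ∧ DyckP m n (l.rotate k) := by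
  have hL : 0 < l.length := by omega
  -- existence of a minimizer
  obtain ⟨k₀, hk₀mem, hk₀min⟩ := Finset.exists_min_image (Finset.range (l.length + 1))
    (G m n l) ⟨0, by simp⟩
  rw [Finset.mem_range] at hk₀mem
  have hk₀le : k₀ ≤ l.length := by omega
  have hmin : ∀ i ≤ l.length, G m n l k₀ ≤ G m n l i := fun i hi =>
    hk₀min i (Finset.mem_range.mpr (by omega))
  -- adjust to k < length
  have hEx : ∃ k, k < l.length ∧ (∀ i ≤ l.length, G m n l k ≤ G m n l i) := by
    rcases lt_or_eq_of_le hk₀le with hlt | heq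
    · exact ⟨k₀, hlt, hmin⟩
    · refine ⟨0, hL, fun i hi => ?_⟩
      rw [G_zero (m := m) (n := n) (l := l), ← G_length hlen hct, ← heq]
      exact hmin i hi
  obtain ⟨k, hk, hkmin⟩ := hEx
  refine ⟨k, ⟨hk, (dyck_rotate_iff hlen hct (le_of_lt hk)).mpr hkmin⟩, ?_⟩
  rintro k' ⟨hk', hdk'⟩
  have hk'min := (dyck_rotate_iff hlen hct (le_of_lt hk')).mp hdk'
  by_contra hne
  have hGeq : G m n l k' = G m n l k :=
    le_antisymm (hk'min k (le_of_lt hk)) (hkmin k' (le_of_lt hk'))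
  rcases Nat.lt_or_ge k' k with hlt | hge
  · obtain ⟨_, h2⟩ := G_inj hlen hct hn hco hlt (le_of_lt hk) hGeq
    omega
  · have hlt : k < k' := by omega
    obtain ⟨_, h2⟩ := G_inj hlen hct hn hco hlt (le_of_lt hk') hGeq.symm
    omega

end MN

/-- The rotation map as a bijection: total count = Dyck count times (m+n). -/
lemma card_eq {m n : ℕ} (hm : 0 < m) (hn : 0 < n) (hco : Nat.Coprime m n) :
    Nat.card {p : List Bool // p.length = m + n ∧ p.count true = n}
      = Nat.card {p : List Bool // p.length = m + n ∧ p.count true = n ∧ DyckP m n p}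
        * (m + n) := by
  have hL : 0 < m + n := by omega
  have hrotL : ∀ q : List Bool, q.length = m + n → q.rotate (m + n) = q := by
    intro q hq; rw [← hq, List.rotate_length]
  have hrotMod : ∀ (q : List Bool), q.length = m + n →
      ∀ x, q.rotate (x % (m + n)) = q.rotate x := by
    intro q hq x; rw [← hq, List.rotate_mod]
  set D := {p : List Bool // p.length = m + n ∧ p.count true = n ∧ DyckP m n p} with hD
  set S' := {p : List Bool // p.length = m + n ∧ p.count true = n} with hS
  have hrotmem : ∀ (d : D) (j : ℕ), (d.1.rotate j).length = m + n ∧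
      (d.1.rotate j).count true = n := fun d j =>
    ⟨by rw [List.length_rotate]; exact d.2.1,
     by rw [(d.1.rotate_perm j).count_eq]; exact d.2.2.1⟩
  let F : D × Fin (m + n) → S' := fun x => ⟨x.1.1.rotate x.2.1, hrotmem x.1 x.2.1⟩
  have hbij : Function.Bijective F := by
    constructor
    · rintro ⟨d, j⟩ ⟨d', j'⟩ hFeq
      have heq : d.1.rotate j.1 = d'.1.rotate j'.1 := congrArg Subtype.val hFeq
      obtain ⟨k, _, huniq⟩ := exists_unique_dyck_rotate hm hn d.2.1 d.2.2.1 hco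
      have hrotd' : d.1.rotate (j.1 + (m + n - j'.1)) = d'.1 := by
        rw [← List.rotate_rotate, heq, List.rotate_rotate, Nat.add_sub_cancel' j'.2.le,
          hrotL d'.1 d'.2.1]
      have hk2lt : (j.1 + (m + n - j'.1)) % (m + n) < m + n := Nat.mod_lt _ hL
      have hdk2 : d.1.rotate ((j.1 + (m + n - j'.1)) % (m + n)) = d'.1 := by
        rw [hrotMod d.1 d.2.1, hrotd']
      have h0 : k = 0 := (huniq 0 ⟨by rw [d.2.1]; omega, by
        rw [List.rotate_zero]; exact d.2.2.2⟩).symm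
      have hk2 : (j.1 + (m + n - j'.1)) % (m + n) = k := by
        refine huniq _ ⟨by rw [d.2.1]; exact hk2lt, ?_⟩
        rw [hdk2]; exact d'.2.2.2
      have hmod : (j.1 + (m + n - j'.1)) % (m + n) = 0 := by omega
      obtain ⟨c, hc⟩ := Nat.dvd_of_mod_eq_zero hmod
      have hj : j.1 = j'.1 := by
        have hjlt := j.2
        have hj'lt := j'.2
        have hcb : (m + n) * c < (m + n) * 2 := by omega
        have hc2 : c < 2 := Nat.lt_of_mul_lt_mul_left hcb
        interval_cases c <;> omega
      have hdd : d = d' := by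
        apply Subtype.ext
        rw [hmod] at hdk2
        rw [← hdk2, List.rotate_zero]
      cases hdd
      cases Fin.ext hj
      rfl
    · rintro ⟨p, hplen, hpct⟩
      obtain ⟨k, ⟨hklt, hkd⟩, -⟩ := exists_unique_dyck_rotate hm hn hplen hpct hco
      rw [hplen] at hklt
      refine ⟨⟨⟨p.rotate k, by rw [List.length_rotate]; exact hplen,
        by rw [(p.rotate_perm k).count_eq]; exact hpct, hkd⟩,
        ⟨(m + n - k) % (m + n), Nat.mod_lt _ hL⟩⟩, ?_⟩
      apply Subtype.ext
      show (p.rotate k).rotate ((m + n - k) % (m + n)) = p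
      rw [hrotMod _ (by rw [List.length_rotate]; exact hplen), List.rotate_rotate,
        Nat.add_sub_cancel' (by omega : k ≤ m + n), hrotL p hplen]
  have hcc := Nat.card_congr (Equiv.ofBijective F hbij).symm
  rw [hcc, Nat.card_prod, Nat.card_eq_fintype_card (α := Fin (m + n)), Fintype.card_fin]

end Sweep18


private lemma count_ofFn' (L : ℕ) (f : Fin L → Bool) :
    (List.ofFn f).count true = (Finset.univ.filter fun i => f i = true).card := by
  induction L with
  | zero => simp
  | succ L ih =>
    rw [List.ofFn_succ, Finset.card_filter, Fin.sum_univ_succ, ← Finset.card_filter,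
      List.count_cons, ih (fun i => f i.succ)]
    cases hf : f 0 <;> simp [hf, add_comm]

private lemma card_lists (L n : ℕ) :
    Nat.card {p : List Bool // p.length = L ∧ p.count true = n} = L.choose n := by
  have e1 : {p : List Bool // p.length = L ∧ p.count true = n} ≃
      {v : List.Vector Bool L // v.toList.count true = n} :=
    ⟨fun p => ⟨⟨p.1, p.2.1⟩, p.2.2⟩, fun v => ⟨v.1.1, v.1.2, v.2⟩,
      fun p => rfl, fun v => rfl⟩
  have e2 : {v : List.Vector Bool L // v.toList.count true = n} ≃
      {f : Fin L → Bool // (Finset.univ.filter fun i => f i = true).card = n} :=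
    (Equiv.vectorEquivFin Bool L).subtypeEquiv (by
      intro v
      rw [← count_ofFn' L (Equiv.vectorEquivFin Bool L v)]
      have hv : List.ofFn v.get = v.toList := by
        rw [← List.Vector.toList_ofFn, List.Vector.ofFn_get]
      simp only [Equiv.vectorEquivFin, Equiv.coe_fn_mk, hv])
  have e3 : {f : Fin L → Bool // (Finset.univ.filter fun i => f i = true).card = n} ≃
      {s : Finset (Fin L) // s.card = n} :=
    ⟨fun f => ⟨Finset.univ.filter fun i => f.1 i = true, f.2⟩,
     fun s => ⟨fun i => i ∈ s.1, by simpa using s.2⟩,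
     fun f => by ext i; simp,
     fun s => by ext i; simp⟩
  rw [Nat.card_congr ((e1.trans e2).trans e3), Nat.card_eq_fintype_card,
    Fintype.card_finset_len, Fintype.card_fin]

/-- For coprime positive `m, n`, the number of `(m,n)`-Dyck paths (0-1 sequences of
length `m+n` with `n` ones—North steps—whose every prefix with `a` ones and `b`
zeros satisfies `n*b ≤ m*a`) is the rational Catalan number
`binomial(m+n, n) / (m+n)`. -/
theorem sweep_stmt18 (m n : ℕ) (hm : 0 < m) (hn : 0 < n) (h : Nat.Coprime m n) :
    Nat.card {p : List Bool // p.length = m + n ∧ p.count true = n ∧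
        ∀ k, n * ((p.take k).count false) ≤ m * ((p.take k).count true)}
      = (m + n).choose n / (m + n) := by
  have key := Sweep18.card_eq hm hn h
  rw [card_lists] at key
  have hL : 0 < m + n := by omega
  have hfin : Nat.card {p : List Bool // p.length = m + n ∧ p.count true = n ∧
      Sweep18.DyckP m n p} = (m + n).choose n / (m + n) := by
    rw [key, Nat.mul_div_cancel _ hL]
  exact hfin
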